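/- Let k ≥ 1 and let γ = (√(k²+4) − k)/2 (the value of the continued fraction [0; k, k, k, …]). Suppose H : ℕ → ℕ satisfies H(n) = 0 for 0 ≤ n < k and, for all n ≥ k, H(n) + H(n−1) + ⋯ + H(n−k+1) + H(H(n−k)) = n − k + 1. Then H(n) = ⌊γ(n+1)⌋ for all n ≥ 1. -/

import Mathlib

/-- The slow Beatty function `n ↦ ⌊γ(n+1)⌋₊`. -/
noncomputable def crG (γ : ℝ) (n : ℕ) : ℕ := ⌊γ * ((n : ℝ) + 1)⌋₊

lemma crG_cast {γ : ℝ} (h0 : 0 ≤ γ) (n : ℕ) :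
    (crG γ n : ℤ) = ⌊γ * ((n : ℝ) + 1)⌋ := by
  unfold crG
  exact Int.natCast_floor_eq_floor (by positivity)

lemma crG_le {γ : ℝ} (h0 : 0 < γ) (h1 : γ < 1) (n : ℕ) : crG γ n ≤ n := by
  have hfl : ⌊γ * ((n : ℝ) + 1)⌋₊ < n + 1 := by
    rw [Nat.floor_lt (by positivity)]
    have : (0 : ℝ) < (n : ℝ) + 1 := by positivity
    push_cast
    nlinarith
  unfold crG
  omega

/-- The key floor identity. -/
lemma cr_key (k : ℕ) (γ : ℝ) (hk : 1 ≤ k) (h0 : 0 < γ) (h1 : γ < 1)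
    (hq : γ * (γ + k) = 1) (hirr : Irrational γ) (m : ℕ) (hm : 1 ≤ m) :
    (∑ j ∈ Finset.Icc 1 k, ⌊γ * ((m : ℝ) + (j : ℝ))⌋) + ⌊γ * ((⌊γ * (m : ℝ)⌋ : ℝ) + 1)⌋
      = (m : ℤ) := by
  have hIrrN : ∀ N : ℕ, 1 ≤ N → Irrational (γ * N) := by
    intro N hN
    rw [mul_comm]
    exact hirr.natCast_mul (by omega)
  set x : ℝ := γ * m with hxdef
  set f : ℤ := ⌊x⌋ with hfdef
  set t : ℝ := Int.fract x with htdef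
  have hft : (f : ℝ) + t = γ * m := Int.floor_add_fract x
  have ht0 : 0 < t := Int.fract_pos.mpr ((hIrrN m hm).ne_int f)
  have ht1 : t < 1 := Int.fract_lt_one x
  have hγk1 : γ * (k : ℝ) < 1 := by nlinarith [sq_nonneg γ]
  set v : ℝ := γ - t * (γ + k) with hvdef
  set L : ℤ := k + ⌊v⌋ with hLdef
  have hL_floor : ⌊(1 - t) * (γ + (k:ℝ))⌋ = L := by
    have he : (1 - t) * (γ + (k:ℝ)) = (((k : ℕ) : ℤ) : ℝ) + v := by
      push_cast
      linear_combination -hvdef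
    rw [he, Int.floor_intCast_add]
  have hu0 : 0 < (1 - t) * (γ + (k:ℝ)) := by
    have hkk : (0:ℝ) < γ + k := by positivity
    nlinarith
  have huk : (1 - t) * (γ + (k:ℝ)) < (k : ℝ) + 1 := by
    have hkk : (0:ℝ) < γ + k := by positivity
    nlinarith
  have hL0 : 0 ≤ L := by
    rw [← hL_floor]
    exact Int.floor_nonneg.mpr hu0.le
  have hLk : L ≤ (k : ℤ) := by
    have hlt : L < (k : ℤ) + 1 := by
      rw [← hL_floor, Int.floor_lt]
      push_cast
      linarith
    omega
  have e1 : 1 - t = ((1 - t) * (γ + (k:ℝ))) * γ := by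
    linear_combination (t - 1) * hq
  have hterm : ∀ j ∈ Finset.Icc 1 k,
      ⌊γ * ((m : ℝ) + (j : ℝ))⌋ = f + (if L < (j : ℤ) then 1 else 0) := by
    intro j hj
    simp only [Finset.mem_Icc] at hj
    have hx' : γ * ((m : ℝ) + (j : ℝ)) = (f : ℝ) + (t + (j : ℝ) * γ) := by
      linear_combination -hft
    rw [hx', Int.floor_intCast_add]
    congr 1
    have hjk : (j : ℝ) ≤ (k : ℝ) := by exact_mod_cast hj.2
    have hjγ : (j : ℝ) * γ ≤ (k : ℝ) * γ := by nlinarith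
    by_cases hLj : L < (j : ℤ)
    · rw [if_pos hLj]
      have hu_lt : (1 - t) * (γ + (k:ℝ)) < (L : ℝ) + 1 := by
        rw [← hL_floor]
        exact Int.lt_floor_add_one _
      have hj' : (L : ℝ) + 1 ≤ (j : ℝ) := by exact_mod_cast hLj
      have h1t : 1 - t < (j : ℝ) * γ := by
        rw [e1]
        exact mul_lt_mul_of_pos_right (by linarith) h0
      have h2 : t + (j : ℝ) * γ < 2 := by nlinarith
      rw [Int.floor_eq_iff]
      constructor
      · push_cast; linarith
      · push_cast; linarith
    · rw [if_neg hLj]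
      push_neg at hLj
      have hjL : (j : ℝ) ≤ (L : ℝ) := by exact_mod_cast hLj
      have hLu : (L : ℝ) ≤ (1 - t) * (γ + (k:ℝ)) := by
        rw [← hL_floor]
        exact Int.floor_le _
      have hle : t + (j : ℝ) * γ ≤ 1 := by
        have := mul_le_mul_of_nonneg_right (le_trans hjL hLu) h0.le
        rw [← e1] at this
        linarith
      have hne : t + (j : ℝ) * γ ≠ 1 := by
        intro heq
        have hmj : γ * ((m + j : ℕ) : ℝ) = ((f + 1 : ℤ) : ℝ) := by
          push_cast
          linear_combination heq - hft
        exact (hIrrN (m + j) (by omega)).ne_int (f + 1) (by rw [hmj])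
      have hlt1 : t + (j : ℝ) * γ < 1 := lt_of_le_of_ne hle hne
      rw [Int.floor_eq_iff]
      constructor
      · push_cast
        have : (0:ℝ) < (j:ℝ) * γ := by
          have : (0:ℝ) < (j:ℝ) := by exact_mod_cast hj.1
          positivity
        linarith
      · push_cast; linarith
  have hsum : (∑ j ∈ Finset.Icc 1 k, ⌊γ * ((m : ℝ) + (j : ℝ))⌋)
      = (k : ℤ) * f + ((k : ℤ) - L) := by
    rw [Finset.sum_congr rfl hterm, Finset.sum_add_distrib, Finset.sum_const,
      Nat.card_Icc]
    have hite : (∑ j ∈ Finset.Icc 1 k, (if L < (j : ℤ) then (1:ℤ) else 0))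
        = (k : ℤ) - L := by
      have hcond : ∀ j ∈ Finset.Icc 1 k,
          (if L < (j : ℤ) then (1:ℤ) else 0) = (if L.toNat < j then (1:ℤ) else 0) := by
        intro j _
        have : L < (j : ℤ) ↔ L.toNat < j := by omega
        simp [this]
      rw [Finset.sum_congr rfl hcond, Finset.sum_boole]
      have hfilt : (Finset.Icc 1 k).filter (fun j => L.toNat < j)
          = Finset.Icc (L.toNat + 1) k := by
        ext j
        simp only [Finset.mem_filter, Finset.mem_Icc]
        omega
      rw [hfilt, Nat.card_Icc]
      have : (L.toNat : ℤ) = L := Int.toNat_of_nonneg hL0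
      push_cast
      omega
    rw [hite]
    push_cast
    ring
  have hA : ⌊γ * ((f : ℝ) + 1)⌋ = (m : ℤ) - (k : ℤ) * f + ⌊v⌋ := by
    have hx2 : γ * ((f : ℝ) + 1) = (((m : ℤ) - (k : ℤ) * f : ℤ) : ℝ) + v := by
      push_cast
      linear_combination (m : ℝ) * hq + (γ + (k:ℝ)) * hft - hvdef
    rw [hx2, Int.floor_intCast_add]
  rw [hsum, hA]
  linarith [hLdef]

lemma crG_zero (k : ℕ) (γ : ℝ) (h0 : 0 < γ) (hq : γ * (γ + k) = 1)
    (n : ℕ) (hn : n < k) : crG γ n = 0 := by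
  unfold crG
  rw [Nat.floor_eq_zero]
  have h1 : (n : ℝ) + 1 ≤ (k : ℝ) := by
    have : (n : ℕ) + 1 ≤ k := hn
    exact_mod_cast this
  have hγk1 : γ * (k : ℝ) < 1 := by nlinarith [sq_nonneg γ]
  nlinarith

lemma crG_rec (k : ℕ) (γ : ℝ) (hk : 1 ≤ k) (h0 : 0 < γ) (h1 : γ < 1)
    (hq : γ * (γ + k) = 1) (hirr : Irrational γ) (n : ℕ) (hn : k ≤ n) :
    crG γ n + (∑ i ∈ Finset.Icc 1 (k - 1), crG γ (n - i)) + crG γ (crG γ (n - k))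
      = n - k + 1 := by
  have key := cr_key k γ hk h0 h1 hq hirr (n - k + 1) (by omega)
  -- identify the floors with crG values
  have hcast : ∀ j : ℕ, 1 ≤ j → j ≤ k →
      ⌊γ * (((n - k + 1 : ℕ) : ℝ) + (j : ℝ))⌋ = (crG γ (n - k + j) : ℤ) := by
    intro j hj1 hjk
    rw [crG_cast h0.le]
    congr 2
    have : (n - k + j : ℕ) = (n - k + 1) + (j - 1) := by omega
    rw [this]
    push_cast [Nat.cast_sub hj1]
    ring
  have hm : ⌊γ * ((n - k + 1 : ℕ) : ℝ)⌋ = (crG γ (n - k) : ℤ) := by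
    rw [crG_cast h0.le]
    congr 1
    push_cast
    ring
  rw [hm] at key
  have hm2 : ⌊γ * (((crG γ (n - k) : ℤ) : ℝ) + 1)⌋ = (crG γ (crG γ (n - k)) : ℤ) := by
    rw [show (((crG γ (n - k) : ℤ)) : ℝ) = ((crG γ (n - k) : ℕ) : ℝ) by push_cast; rfl]
    exact (crG_cast h0.le _).symm
  rw [hm2] at key
  have hsum_eq : (∑ j ∈ Finset.Icc 1 k, ⌊γ * (((n - k + 1 : ℕ) : ℝ) + (j : ℝ))⌋)
      = (∑ j ∈ Finset.Icc 1 k, (crG γ (n - k + j) : ℤ)) := by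
    refine Finset.sum_congr rfl fun j hj => ?_
    simp only [Finset.mem_Icc] at hj
    exact hcast j hj.1 hj.2
  rw [hsum_eq] at key
  -- split off the top term j = k
  obtain ⟨k', rfl⟩ : ∃ k', k = k' + 1 := ⟨k - 1, by omega⟩
  rw [Finset.sum_Icc_succ_top (by omega)] at key
  have htop : (n - (k' + 1) + (k' + 1) : ℕ) = n := by omega
  rw [htop] at key
  -- reindex the remaining sum
  have hre : (∑ j ∈ Finset.Icc 1 k', (crG γ (n - (k' + 1) + j) : ℤ))
      = (∑ i ∈ Finset.Icc 1 ((k' + 1) - 1), (crG γ (n - i) : ℤ)) := by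
    simp only [Nat.add_sub_cancel]
    refine Finset.sum_nbij' (fun j => k' + 1 - j) (fun i => k' + 1 - i) ?_ ?_ ?_ ?_ ?_
    · intro a ha; simp only [Finset.mem_Icc] at ha ⊢; omega
    · intro a ha; simp only [Finset.mem_Icc] at ha ⊢; omega
    · intro a ha; simp only [Finset.mem_Icc] at ha; omega
    · intro a ha; simp only [Finset.mem_Icc] at ha; omega
    · intro a ha
      simp only [Finset.mem_Icc] at ha
      congr 2
      omega
  rw [hre] at key
  -- conclude in ℕ
  have hfin : ((crG γ n : ℤ)) + (∑ i ∈ Finset.Icc 1 ((k' + 1) - 1), (crG γ (n - i) : ℤ))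
      + (crG γ (crG γ (n - (k' + 1))) : ℤ) = ((n - (k' + 1) + 1 : ℕ) : ℤ) := by
    push_cast at key ⊢
    linarith
  exact_mod_cast hfin

/-- Celaya–Ruskey: for `k ≥ 1` and `γ = (√(k²+4) − k)/2 = [0; k, k, k, …]`,
if `H(n) = 0` for `n < k` and
`H(n) + H(n−1) + ⋯ + H(n−k+1) + H(H(n−k)) = n − k + 1` for all `n ≥ k`,
then `H(n) = ⌊γ(n+1)⌋` for all `n ≥ 1`. -/
theorem celaya_ruskey
    (k : ℕ) (hk : 1 ≤ k)
    (γ : ℝ) (hγ : γ = (Real.sqrt ((k : ℝ) ^ 2 + 4) - k) / 2)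
    (H : ℕ → ℕ)
    (H0 : ∀ n : ℕ, n < k → H n = 0)
    (Hrec : ∀ n : ℕ, k ≤ n →
      H n + (∑ i ∈ Finset.Icc 1 (k - 1), H (n - i)) + H (H (n - k)) = n - k + 1) :
    ∀ n : ℕ, 1 ≤ n → H n = ⌊γ * ((n : ℝ) + 1)⌋₊ := by
  have hs0 : (0:ℝ) ≤ Real.sqrt ((k : ℝ) ^ 2 + 4) := Real.sqrt_nonneg _
  have hs2 : Real.sqrt ((k : ℝ) ^ 2 + 4) ^ 2 = (k : ℝ) ^ 2 + 4 :=
    Real.sq_sqrt (by positivity)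
  have hk1 : (1:ℝ) ≤ (k:ℝ) := by exact_mod_cast hk
  have h0 : 0 < γ := by
    rw [hγ]
    have : (k : ℝ) < Real.sqrt ((k : ℝ) ^ 2 + 4) := by nlinarith
    linarith
  have h1 : γ < 1 := by
    rw [hγ]
    have : Real.sqrt ((k : ℝ) ^ 2 + 4) < (k : ℝ) + 2 := by nlinarith
    linarith
  have hq : γ * (γ + k) = 1 := by
    rw [hγ]
    linear_combination hs2 / 4
  have hirr : Irrational γ := by
    have hnsq : ¬ IsSquare (k ^ 2 + 4) := by
      rintro ⟨a, ha⟩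
      have hka : k < a := by nlinarith
      have hak : a < k + 2 := by nlinarith
      have : a = k + 1 := by omega
      subst this
      ring_nf at ha
      omega
    have hsirr : Irrational (Real.sqrt ((k : ℝ) ^ 2 + 4)) := by
      have he : ((k : ℝ) ^ 2 + 4) = ((k ^ 2 + 4 : ℕ) : ℝ) := by push_cast; ring
      rw [he]
      exact irrational_sqrt_natCast_iff.mpr hnsq
    rw [hγ]
    have h2 := (hsirr.sub_natCast k).div_natCast (m := 2) (by norm_num)
    simpa using h2
  have main : ∀ n, H n = crG γ n := by
    intro n
    induction n using Nat.strong_induction_on with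
    | _ n ih =>
      by_cases hn : n < k
      · rw [H0 n hn, crG_zero k γ h0 hq n hn]
      · push_neg at hn
        have h1r := Hrec n hn
        have h2r := crG_rec k γ hk h0 h1 hq hirr n hn
        have hsum : ∑ i ∈ Finset.Icc 1 (k - 1), H (n - i)
            = ∑ i ∈ Finset.Icc 1 (k - 1), crG γ (n - i) := by
          refine Finset.sum_congr rfl fun i hi => ?_
          simp only [Finset.mem_Icc] at hi
          exact ih _ (by omega)
        have hnk : H (n - k) = crG γ (n - k) := ih _ (by omega)
        have hHH : H (H (n - k)) = crG γ (crG γ (n - k)) := by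
          rw [hnk]
          exact ih _ (by
            have := crG_le h0 h1 (n - k)
            omega)
        rw [hsum, hHH] at h1r
        omega
  intro n _
  exact main n
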